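/- Let φ : [0,1] → ℝ be a convex function with a subgradient ∇φ satisfying ∇φ(v) ∈ [−1, 1] for every v ∈ [0,1]. Then for any probability distribution Π on [0,1] × [0,1] of pairs (v1, v2), E_{(v1,v2)∼Π} D_φ(v1 ‖ v2) ≤ sup_{v* ∈ [0,1]} E_{(v1,v2)∼Π} D_{φ_{v*}}(v1 ‖ v2), where for each v* the V-shaped divergence D_{φ_{v*}} is the Bregman divergence of φ_{v*}(v) = |v − v*| with respect to the subgradient ∇φ_{v*}(v) = −1 for v < v* and ∇φ_{v*}(v) = 1 for v ≥ v*. -/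

import Mathlib

open scoped Classical
open MeasureTheory Set

noncomputable section

/-- `g` is a subgradient of `φ` on `[0,1]`:
`φ(w) ≥ φ(v) + g(v)·(w - v)` for all `v, w ∈ [0,1]`. -/
def IsSubgradientOn (φ g : ℝ → ℝ) : Prop :=
  ∀ v ∈ Set.Icc (0 : ℝ) 1, ∀ w ∈ Set.Icc (0 : ℝ) 1, φ v + g v * (w - v) ≤ φ w

/-- The Bregman divergence `D_φ(a ‖ b) = φ(a) - φ(b) - ∇φ(b)·(a - b)`. -/
def breg (φ g : ℝ → ℝ) (a b : ℝ) : ℝ := φ a - φ b - g b * (a - b)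

/-- The V-shaped function `φ_{v*}(v) = |v - v*|`. -/
def vshape (vs : ℝ) : ℝ → ℝ := fun v => |v - vs|

/-- The chosen subgradient of the V-shaped function: `-1` for `v < v*`, `1` for `v ≥ v*`. -/
def vshapeGrad (vs : ℝ) : ℝ → ℝ := fun v => if v < vs then -1 else 1

open MeasureTheory Set Function Filter Topology

namespace BregmanAux

def clamp (t : ℝ) : ℝ := max 0 (min 1 t)

lemma clamp_mem (t : ℝ) : clamp t ∈ Icc (0:ℝ) 1 := by
  constructor
  · exact le_max_left _ _
  · simp only [clamp, max_le_iff]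
    exact ⟨zero_le_one, min_le_left _ _⟩

lemma clamp_mono : Monotone clamp := fun s t hst => by
  simp only [clamp]
  exact max_le_max le_rfl (min_le_min le_rfl hst)

lemma clamp_eq {t : ℝ} (ht : t ∈ Icc (0:ℝ) 1) : clamp t = t := by
  simp only [clamp]
  rw [min_eq_right ht.2, max_eq_right ht.1]

def qinv (G : ℝ → ℝ) (y : ℝ) : ℝ := sSup (insert 0 {t | t ∈ Icc (0:ℝ) 1 ∧ G t ≤ y})

def rsel (G : ℝ → ℝ) (η y : ℝ) : ℝ :=
  if y < G (qinv G y) then qinv G y else min 1 (qinv G y + η)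

section QinvRsel

variable {G : ℝ → ℝ} {η y : ℝ}

lemma qinv_set_nonempty (G : ℝ → ℝ) (y : ℝ) :
    (insert (0:ℝ) {t | t ∈ Icc (0:ℝ) 1 ∧ G t ≤ y}).Nonempty :=
  ⟨0, mem_insert _ _⟩

lemma qinv_set_bdd (G : ℝ → ℝ) (y : ℝ) :
    BddAbove (insert (0:ℝ) {t | t ∈ Icc (0:ℝ) 1 ∧ G t ≤ y}) := by
  refine ⟨1, fun t ht => ?_⟩
  rcases ht with h | h
  · simp [h]
  · exact h.1.2

lemma qinv_mem (G : ℝ → ℝ) (y : ℝ) : qinv G y ∈ Icc (0:ℝ) 1 := by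
  constructor
  · exact le_csSup (qinv_set_bdd G y) (mem_insert _ _)
  · refine csSup_le (qinv_set_nonempty G y) fun t ht => ?_
    rcases ht with h | h
    · simp [h]
    · exact h.1.2

lemma le_qinv {t : ℝ} (ht : t ∈ Icc (0:ℝ) 1) (h : G t ≤ y) : t ≤ qinv G y :=
  le_csSup (qinv_set_bdd G y) (Or.inr ⟨ht, h⟩)

lemma qinv_lt_imp (hG : Monotone G) {t : ℝ} (ht : 0 ≤ t) (h : t < qinv G y) : G t ≤ y := by
  obtain ⟨s, hs, hts⟩ := exists_lt_of_lt_csSup (qinv_set_nonempty G y) h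
  rcases hs with h0 | hmem
  · exfalso; rw [h0] at hts; linarith
  · exact le_trans (hG hts.le) hmem.2

lemma qinv_le (hG : Monotone G) {t : ℝ} (ht : 0 ≤ t) (h : y < G t) : qinv G y ≤ t := by
  by_contra hc
  exact absurd (qinv_lt_imp hG ht (lt_of_not_ge hc)) (not_le.mpr h)

lemma rsel_mem (hη : 0 ≤ η) (y : ℝ) : rsel G η y ∈ Icc (0:ℝ) 1 := by
  have h0 := (qinv_mem G y).1
  have h1 := (qinv_mem G y).2
  unfold rsel
  split_ifs
  · exact qinv_mem G y
  · exact ⟨le_min zero_le_one (by linarith), min_le_left _ _⟩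

lemma qinv_le_rsel (hη : 0 ≤ η) (y : ℝ) : qinv G y ≤ rsel G η y := by
  have h1 := (qinv_mem G y).2
  unfold rsel
  split_ifs
  · exact le_rfl
  · exact le_min h1 (by linarith)

lemma lt_rsel (hη : 0 < η) {b : ℝ} (hb0 : 0 ≤ b) (hb1 : b < 1) (h : G b ≤ y) :
    b < rsel G η y := by
  have hq : b ≤ qinv G y := le_qinv ⟨hb0, hb1.le⟩ h
  rcases lt_or_eq_of_le hq with hlt | heq
  · exact hlt.trans_le (qinv_le_rsel hη.le y)
  · unfold rsel
    rw [← heq]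
    split_ifs with hcond
    · exact absurd h (not_le.mpr hcond)
    · exact lt_min hb1 (by linarith)

lemma rsel_le (hG : Monotone G) (hη : 0 < η) {t : ℝ} (ht : 0 ≤ t - η) (h : y < G (t - η)) :
    rsel G η y ≤ t := by
  have hq : qinv G y ≤ t - η := qinv_le hG ht h
  unfold rsel
  split_ifs
  · linarith
  · exact le_trans (min_le_right _ _) (by linarith)

lemma rsel_eq_of_jump (hG : Monotone G) {b : ℝ} (hb : b ∈ Icc (0:ℝ) 1)
    (h1 : leftLim G b ≤ y) (h2 : y < G b) : rsel G η y = b := by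
  have hqb : qinv G y = b := by
    have hle : qinv G y ≤ b := qinv_le hG hb.1 h2
    have hge : b ≤ qinv G y := by
      by_contra hc
      push_neg at hc
      have h0 : (0:ℝ) ≤ qinv G y := (qinv_mem G y).1
      have hmid2 : qinv G y < (qinv G y + b) / 2 := by linarith
      have hmid : (qinv G y + b) / 2 < b := by linarith
      have hmem : (qinv G y + b) / 2 ∈ Icc (0:ℝ) 1 := ⟨by linarith, by linarith [hb.2]⟩
      have hlim : G ((qinv G y + b) / 2) ≤ leftLim G b := hG.le_leftLim hmid
      exact absurd (le_qinv hmem (hlim.trans h1)) (not_le.mpr hmid2)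
    exact hle.antisymm hge
  unfold rsel
  rw [hqb, if_pos h2]

lemma qinv_mono : Monotone (qinv G) := fun y₁ y₂ h => by
  apply csSup_le_csSup (qinv_set_bdd G y₂) (qinv_set_nonempty G y₁)
  rintro t (ht | ht)
  · exact Or.inl ht
  · exact Or.inr ⟨ht.1, ht.2.trans h⟩

lemma rsel_measurable (hG : Monotone G) (η : ℝ) : Measurable (rsel G η) := by
  have hq : Measurable (qinv G) := (qinv_mono (G := G)).measurable
  have hGq : Measurable (fun y => G (qinv G y)) := by
    have : Monotone (fun y => G (qinv G y)) := fun y₁ y₂ h => hG (qinv_mono h)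
    exact this.measurable
  have hset : MeasurableSet {y : ℝ | y < G (qinv G y)} := measurableSet_lt measurable_id hGq
  unfold rsel
  exact Measurable.ite hset hq (measurable_const.min (hq.add_const η))

end QinvRsel

lemma vbreg_nonneg (vs a b : ℝ) : 0 ≤ breg (vshape vs) (vshapeGrad vs) a b := by
  simp only [breg, vshape, vshapeGrad]
  split_ifs with h
  · rcases abs_cases (a - vs) with ⟨h1, _⟩ | ⟨h1, _⟩ <;>
      rcases abs_cases (b - vs) with ⟨h2, _⟩ | ⟨h2, _⟩ <;> linarith
  · push_neg at h
    rcases abs_cases (a - vs) with ⟨h1, _⟩ | ⟨h1, _⟩ <;>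
      rcases abs_cases (b - vs) with ⟨h2, _⟩ | ⟨h2, _⟩ <;> linarith

lemma vbreg_eq_right {vs a b : ℝ} (h : b < vs) :
    breg (vshape vs) (vshapeGrad vs) a b = |a - vs| + (a - vs) := by
  simp only [breg, vshape, vshapeGrad, if_pos h, abs_of_neg (by linarith : b - vs < 0)]
  ring

lemma vbreg_eq_left {vs a b : ℝ} (h : vs ≤ b) :
    breg (vshape vs) (vshapeGrad vs) a b = |a - vs| - (a - vs) := by
  simp only [breg, vshape, vshapeGrad, if_neg (not_lt.mpr h),
    abs_of_nonneg (by linarith : 0 ≤ b - vs)]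
  ring

lemma vbreg_bound {vs a b : ℝ} (hv : vs ∈ Icc (0:ℝ) 1) (ha : a ∈ Icc (0:ℝ) 1)
    (hb : b ∈ Icc (0:ℝ) 1) : |breg (vshape vs) (vshapeGrad vs) a b| ≤ 3 := by
  have h1 : |a - vs| ≤ 1 := abs_le.mpr ⟨by linarith [ha.1, hv.2], by linarith [ha.2, hv.1]⟩
  have h2 : |b - vs| ≤ 1 := abs_le.mpr ⟨by linarith [hb.1, hv.2], by linarith [hb.2, hv.1]⟩
  have h3 : |a - b| ≤ 1 := abs_le.mpr ⟨by linarith [ha.1, hb.2], by linarith [ha.2, hb.1]⟩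
  have e1 := abs_le.mp h1
  have e2 := abs_le.mp h2
  have e3 := abs_le.mp h3
  have ha1 := abs_nonneg (a - vs)
  have hb1 := abs_nonneg (b - vs)
  have hab := neg_abs_le (a - b)
  have hab2 := le_abs_self (a - b)
  simp only [breg, vshape, vshapeGrad]
  rw [abs_le]
  split_ifs <;> constructor <;> linarith

section Phi
variable {φ g : ℝ → ℝ}

def gbar (g : ℝ → ℝ) : ℝ → ℝ := fun t => g (clamp t)

lemma mono_of_subgrad (hsub : IsSubgradientOn φ g) : MonotoneOn g (Icc (0:ℝ) 1) := by
  intro v hv w hw hvw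
  rcases eq_or_lt_of_le hvw with rfl | hlt
  · exact le_rfl
  · have h1 := hsub v hv w hw
    have h2 := hsub w hw v hv
    nlinarith

lemma gbar_mono (hsub : IsSubgradientOn φ g) : Monotone (gbar g) :=
  fun s t hst => mono_of_subgrad hsub (clamp_mem s) (clamp_mem t) (clamp_mono hst)

lemma gbar_mem (hbdd : ∀ v ∈ Icc (0:ℝ) 1, g v ∈ Icc (-1:ℝ) 1) (t : ℝ) :
    gbar g t ∈ Icc (-1:ℝ) 1 := hbdd _ (clamp_mem t)

lemma gbar_eq {t : ℝ} (ht : t ∈ Icc (0:ℝ) 1) : gbar g t = g t := by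
  unfold gbar; rw [clamp_eq ht]

lemma phi_eq (hsub : IsSubgradientOn φ g) (hbdd : ∀ v ∈ Icc (0:ℝ) 1, g v ∈ Icc (-1:ℝ) 1)
    {x y : ℝ} (hx : 0 ≤ x) (hxy : x ≤ y) (hy : y ≤ 1) :
    φ y - φ x = ∫ t in x..y, gbar g t := by
  have hG : Monotone (gbar g) := gbar_mono hsub
  set I := ∫ t in x..y, gbar g t with hI
  have key : ∀ n : ℕ, |φ y - φ x - I| ≤ 2 * (y - x) / (n + 1) := by
    intro n
    have hNpos : (0:ℝ) < (n:ℝ) + 1 := by positivity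
    set h := (y - x) / ((n:ℝ) + 1) with hh
    have hh0 : 0 ≤ h := div_nonneg (by linarith) hNpos.le
    set p : ℕ → ℝ := fun i => x + i * h with hp
    have hp0 : p 0 = x := by simp [hp]
    have hpN : p (n+1) = y := by
      simp only [hp, hh]
      push_cast
      field_simp
      ring
    have hstep : ∀ i : ℕ, p (i + 1) - p i = h := by intro i; simp only [hp]; push_cast; ring
    have hple : ∀ i j : ℕ, i ≤ j → p i ≤ p j := by
      intro i j hij
      simp only [hp]
      have hc : (i:ℝ) ≤ j := by exact_mod_cast hij
      nlinarith
    have hmem : ∀ i : ℕ, i ≤ n + 1 → p i ∈ Icc (0:ℝ) 1 := by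
      intro i hi
      constructor
      · have h0 : (0:ℝ) ≤ (i:ℝ) * h := by positivity
        simp only [hp]; linarith
      · have := hple i (n+1) hi; rw [hpN] at this; linarith
    have hup : ∀ i : ℕ, i < n + 1 → φ (p (i+1)) - φ (p i) ≤ gbar g (p (i+1)) * h := by
      intro i hi
      have h1 := hsub (p (i+1)) (hmem (i+1) hi) (p i) (hmem i hi.le)
      have h2 : p i - p (i+1) = -h := by rw [← hstep i]; ring
      rw [h2, mul_neg] at h1
      rw [gbar_eq (hmem (i+1) hi)]
      linarith
    have hlo : ∀ i : ℕ, i < n + 1 → gbar g (p i) * h ≤ φ (p (i+1)) - φ (p i) := by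
      intro i hi
      have h1 := hsub (p i) (hmem i hi.le) (p (i+1)) (hmem (i+1) hi)
      rw [hstep i] at h1
      rw [gbar_eq (hmem i hi.le)]
      linarith
    have hint : ∀ k : ℕ, IntervalIntegrable (gbar g) volume (p k) (p (k+1)) := fun k =>
      hG.intervalIntegrable
    have hsplit : ∑ i ∈ Finset.range (n+1), ∫ t in p i..p (i+1), gbar g t = I := by
      rw [hI, ← hp0, ← hpN]
      exact intervalIntegral.sum_integral_adjacent_intervals (fun k _ => hint k)
    have hIup : ∀ i : ℕ, i < n + 1 → (∫ t in p i..p (i+1), gbar g t) ≤ gbar g (p (i+1)) * h := by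
      intro i _
      have hle : p i ≤ p (i+1) := by linarith [hstep i]
      have hm : (∫ t in p i..p (i+1), gbar g t) ≤ ∫ _t in p i..p (i+1), gbar g (p (i+1)) :=
        intervalIntegral.integral_mono_on hle (hint i) intervalIntegrable_const
          (fun t ht => hG ht.2)
      rw [intervalIntegral.integral_const, hstep i, smul_eq_mul, mul_comm] at hm
      exact hm
    have hIlo : ∀ i : ℕ, i < n + 1 → gbar g (p i) * h ≤ ∫ t in p i..p (i+1), gbar g t := by
      intro i _
      have hle : p i ≤ p (i+1) := by linarith [hstep i]
      have hm : (∫ _t in p i..p (i+1), gbar g (p i)) ≤ ∫ t in p i..p (i+1), gbar g t :=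
        intervalIntegral.integral_mono_on hle intervalIntegrable_const (hint i)
          (fun t ht => hG ht.1)
      rw [intervalIntegral.integral_const, hstep i, smul_eq_mul, mul_comm] at hm
      exact hm
    have htel : ∑ i ∈ Finset.range (n+1), (φ (p (i+1)) - φ (p i)) = φ y - φ x := by
      rw [Finset.sum_range_sub (fun i => φ (p i)), hp0, hpN]
    have hdiff : φ y - φ x - I = ∑ i ∈ Finset.range (n+1),
        ((φ (p (i+1)) - φ (p i)) - ∫ t in p i..p (i+1), gbar g t) := by
      rw [Finset.sum_sub_distrib, htel, hsplit]
    have htel2 : ∑ i ∈ Finset.range (n+1), (gbar g (p (i+1)) * h - gbar g (p i) * h)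
        = (gbar g y - gbar g x) * h := by
      rw [Finset.sum_range_sub (fun i => gbar g (p i) * h), hp0, hpN]; ring
    have hgb : (gbar g y - gbar g x) * h ≤ 2 * (y - x) / ((n:ℝ)+1) := by
      have h1 := (gbar_mem hbdd y).2
      have h2 := (gbar_mem hbdd x).1
      have h3 : (gbar g y - gbar g x) * h ≤ 2 * h :=
        mul_le_mul_of_nonneg_right (by linarith) hh0
      have h4 : 2 * h = 2 * (y - x) / ((n:ℝ)+1) := by rw [hh]; ring
      linarith
    have hS1 : φ y - φ x - I ≤ (gbar g y - gbar g x) * h := by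
      rw [hdiff, ← htel2]
      apply Finset.sum_le_sum
      intro i hi
      have hi' := Finset.mem_range.mp hi
      linarith [hup i hi', hIlo i hi']
    have hS2 : -((gbar g y - gbar g x) * h) ≤ φ y - φ x - I := by
      rw [hdiff]
      have htel3 : ∑ i ∈ Finset.range (n+1), (gbar g (p i) * h - gbar g (p (i+1)) * h)
          = -((gbar g y - gbar g x) * h) := by
        rw [← htel2, ← Finset.sum_neg_distrib]
        apply Finset.sum_congr rfl
        intro i _
        ring
      rw [← htel3]
      apply Finset.sum_le_sum
      intro i hi
      have hi' := Finset.mem_range.mp hi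
      linarith [hlo i hi', hIup i hi']
    rw [abs_le]
    constructor
    · linarith
    · linarith
  have hlim : Filter.Tendsto (fun k : ℕ => 2 * (y - x) / ((k:ℝ) + 1)) Filter.atTop (nhds 0) := by
    have h1 : Filter.Tendsto (fun k : ℕ => 1 / ((k:ℝ) + 1)) Filter.atTop (nhds 0) :=
      tendsto_one_div_add_atTop_nhds_zero_nat
    have h2 := h1.const_mul (2 * (y - x))
    rw [mul_zero] at h2
    convert h2 using 2 with k
    ring
  have habs : |φ y - φ x - I| ≤ 0 := ge_of_tendsto hlim (Filter.Eventually.of_forall key)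
  have := abs_eq_zero.mp (le_antisymm habs (abs_nonneg _))
  linarith [sub_eq_zero.mp this]

end Phi


section Master
variable {G : ℝ → ℝ} {η y : ℝ}

/-! ### length of Ico pieces inside `Ioc (-1) 1` -/

lemma ico_len {c d : ℝ} (hc : -1 ≤ c) (hd : d ≤ 1) :
    ∫ y in Ioc (-1:ℝ) 1, (Ico c d).indicator (fun _ => (1:ℝ)) y = max 0 (d - c) := by
  rcases le_or_gt d c with hdc | hcd
  · rw [Ico_eq_empty (not_lt.mpr hdc)]
    simp only [indicator_empty, integral_zero]
    rw [max_eq_left (by linarith)]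
  · rw [setIntegral_indicator measurableSet_Ico, setIntegral_const, smul_eq_mul, mul_one]
    have hvol : volume (Ioc (-1:ℝ) 1 ∩ Ico c d) = ENNReal.ofReal (d - c) := by
      apply le_antisymm
      · calc volume (Ioc (-1:ℝ) 1 ∩ Ico c d) ≤ volume (Ico c d) :=
              measure_mono inter_subset_right
          _ = ENNReal.ofReal (d - c) := Real.volume_Ico
      · calc ENNReal.ofReal (d - c) = volume (Ioo c d) := (Real.volume_Ioo).symm
          _ ≤ volume (Ioc (-1:ℝ) 1 ∩ Ico c d) := by
              apply measure_mono
              intro t ht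
              exact ⟨⟨by linarith [ht.1], by linarith [ht.2]⟩, ht.1.le, ht.2⟩
    rw [measureReal_def, hvol, ENNReal.toReal_ofReal (by linarith), max_eq_right (by linarith)]

/-! ### The master pointwise inequality -/

lemma master (φ g : ℝ → ℝ) (hG : Monotone G)
    (hGb : ∀ t, G t ∈ Icc (-1:ℝ) 1)
    (hφ : ∀ x y : ℝ, 0 ≤ x → x ≤ y → y ≤ 1 → φ y - φ x = ∫ t in x..y, G t)
    (hη : 0 < η) {a b : ℝ} (ha : a ∈ Icc (0:ℝ) 1) (hb : b ∈ Icc (0:ℝ) 1)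
    (hgb : g b = G b) :
    breg φ g a b ≤
      (∫ y in Ioc (-1:ℝ) 1, breg (vshape (rsel G η y)) (vshapeGrad (rsel G η y)) a b) / 2
        + 4 * η + (leftLim G b - G (b - η)) := by
  set r := rsel G η with hr
  set L := leftLim G b with hL
  have hL1 : G (b - η) ≤ L := hG.le_leftLim (by linarith)
  have hL2 : L ≤ G b := hG.leftLim_le le_rfl
  have hr_meas : Measurable r := rsel_measurable hG η
  set D : ℝ → ℝ := fun y => breg (vshape (r y)) (vshapeGrad (r y)) a b with hD
  have hD_meas : Measurable D := by
    have h1 : Measurable fun y => |a - r y| := (measurable_const.sub hr_meas).abs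
    have h2 : Measurable fun y => |b - r y| := (measurable_const.sub hr_meas).abs
    have hset : MeasurableSet {y : ℝ | b < r y} := measurableSet_lt measurable_const hr_meas
    have h3 : Measurable fun y => (if b < r y then (-1:ℝ) else 1) * (a - b) :=
      (Measurable.ite hset measurable_const measurable_const).mul_const _
    have : D = fun y => |a - r y| - |b - r y| - (if b < r y then (-1:ℝ) else 1) * (a - b) := by
      funext y
      simp only [hD, breg, vshape, vshapeGrad]
    rw [this]
    exact (h1.sub h2).sub h3
  have hD_nonneg : ∀ y, 0 ≤ D y := fun y => vbreg_nonneg _ _ _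
  have hD_bdd : ∀ y, |D y| ≤ 3 := fun y => vbreg_bound (rsel_mem hη.le y) ha hb
  have hD_int : IntegrableOn D (Ioc (-1:ℝ) 1) volume :=
    (integrable_const (3:ℝ)).mono' hD_meas.aestronglyMeasurable
      (Eventually.of_forall fun y => by rw [Real.norm_eq_abs]; exact hD_bdd y)
  -- the error term is nonnegative
  have he : 0 ≤ L - G (b - η) := by linarith
  rcases lt_trichotomy a b with hab | heq | hba
  · -- case a < b
    have hb0' : 0 < b := lt_of_le_of_lt ha.1 hab
    set f : ℝ → ℝ → ℝ := fun y t => if r y ≤ b ∧ t < r y then (1:ℝ) else 0 with hf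
    have hf_nonneg : ∀ y t, 0 ≤ f y t := by
      intro y t; simp only [hf]; split_ifs <;> norm_num
    have hf_le_one : ∀ y t, f y t ≤ 1 := by
      intro y t; simp only [hf]; split_ifs <;> norm_num
    have hSmeas : MeasurableSet {p : ℝ × ℝ | r p.2 ≤ b ∧ p.1 < r p.2} := by
      apply MeasurableSet.inter
      · exact measurableSet_le (hr_meas.comp measurable_snd) measurable_const
      · exact measurableSet_lt measurable_fst (hr_meas.comp measurable_snd)
    have hIntG : IntegrableOn G (Ioc a b) volume :=
      (hG.intervalIntegrable (a := a) (b := b)).1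
    -- step A
    have hA : breg φ g a b = ∫ t in Ioc a b, (G b - G t) := by
      have h1 : φ b - φ a = ∫ t in Ioc a b, G t := by
        rw [hφ a b ha.1 hab.le hb.2, intervalIntegral.integral_of_le hab.le]
      have h2 : ∫ t in Ioc a b, (G b - G t) = (b - a) * G b - ∫ t in Ioc a b, G t := by
        rw [integral_sub (integrable_const _) hIntG, setIntegral_const, smul_eq_mul,
          Real.volume_real_Ioc_of_le (by linarith)]
      simp only [breg]
      rw [hgb, h2, ← h1]
      ring
    -- step C : pointwise bound for t strictly inside (a, b)
    have hC : ∀ t ∈ Ioo a b,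
        G b - G t ≤ (∫ y in Ioc (-1:ℝ) 1, f y t) + (L - G (b - η)) := by
      intro t ht
      have ht0 : 0 ≤ t := le_trans ha.1 ht.1.le
      have ht1 : t < 1 := lt_of_lt_of_le ht.2 hb.2
      have hind : ∀ y, (Ico (G t) (G (b - η))).indicator (fun _ => (1:ℝ)) y
          + (Ico (max (G t) L) (G b)).indicator (fun _ => (1:ℝ)) y ≤ f y t := by
        intro y
        by_cases hyA : y ∈ Ico (G t) (G (b - η))
        · have hnB : y ∉ Ico (max (G t) L) (G b) := by
            intro hyB
            have h1 : L ≤ y := le_trans (le_max_right _ _) hyB.1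
            linarith [hyA.2]
          rw [indicator_of_mem hyA, indicator_of_notMem hnB]
          have hr2 : t < r y := lt_rsel hη ht0 ht1 hyA.1
          have hr1 : r y ≤ b := by
            by_cases hbη : 0 ≤ b - η
            · exact rsel_le hG hη hbη hyA.2
            · exfalso
              have : G (b - η) ≤ G t := hG (by linarith : b - η ≤ t)
              linarith [hyA.1, hyA.2]
          have hcc : r y ≤ b ∧ t < r y := ⟨hr1, hr2⟩
          simp only [hf]
          rw [if_pos hcc]
          norm_num
        · by_cases hyB : y ∈ Ico (max (G t) L) (G b)
          · rw [indicator_of_notMem hyA, indicator_of_mem hyB]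
            have hrb : r y = b :=
              rsel_eq_of_jump hG hb (le_trans (le_max_right _ _) hyB.1) hyB.2
            have hcc : r y ≤ b ∧ t < r y := ⟨hrb.le, by rw [hrb]; exact ht.2⟩
            simp only [hf]
            rw [if_pos hcc]
            norm_num
          · rw [indicator_of_notMem hyA, indicator_of_notMem hyB]
            simpa using hf_nonneg y t
      have hlen1 : ∫ y in Ioc (-1:ℝ) 1, (Ico (G t) (G (b - η))).indicator (fun _ => (1:ℝ)) y
          = max 0 (G (b - η) - G t) := ico_len (hGb t).1 (hGb (b - η)).2
      have hlen2 : ∫ y in Ioc (-1:ℝ) 1,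
          (Ico (max (G t) L) (G b)).indicator (fun _ => (1:ℝ)) y
          = max 0 (G b - max (G t) L) :=
        ico_len (le_trans (hGb t).1 (le_max_left _ _)) (hGb b).2
      have hintA : IntegrableOn ((Ico (G t) (G (b - η))).indicator (fun _ => (1:ℝ)))
          (Ioc (-1:ℝ) 1) volume := (integrable_const (1:ℝ)).indicator measurableSet_Ico
      have hintB : IntegrableOn ((Ico (max (G t) L) (G b)).indicator (fun _ => (1:ℝ)))
          (Ioc (-1:ℝ) 1) volume := (integrable_const (1:ℝ)).indicator measurableSet_Ico
      have hintf : IntegrableOn (fun y => f y t) (Ioc (-1:ℝ) 1) volume := by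
        apply (integrable_const (1:ℝ)).mono'
        · have hset : MeasurableSet {y : ℝ | r y ≤ b ∧ t < r y} :=
            (measurableSet_le hr_meas measurable_const).inter
              (measurableSet_lt measurable_const hr_meas)
          exact (Measurable.ite hset measurable_const measurable_const).aestronglyMeasurable
        · exact Eventually.of_forall fun y => by
            rw [Real.norm_eq_abs, abs_of_nonneg (hf_nonneg y t)]
            exact hf_le_one y t
      have hsum : (∫ y in Ioc (-1:ℝ) 1,
          ((Ico (G t) (G (b - η))).indicator (fun _ => (1:ℝ)) y
            + (Ico (max (G t) L) (G b)).indicator (fun _ => (1:ℝ)) y))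
          = max 0 (G (b - η) - G t) + max 0 (G b - max (G t) L) := by
        rw [integral_add hintA hintB, hlen1, hlen2]
      have hmono : (∫ y in Ioc (-1:ℝ) 1,
          ((Ico (G t) (G (b - η))).indicator (fun _ => (1:ℝ)) y
            + (Ico (max (G t) L) (G b)).indicator (fun _ => (1:ℝ)) y))
          ≤ ∫ y in Ioc (-1:ℝ) 1, f y t :=
        setIntegral_mono_on (hintA.add hintB) hintf measurableSet_Ioc fun y _ => hind y
      have harith : (G b - G t) - (L - G (b - η))
          ≤ max 0 (G (b - η) - G t) + max 0 (G b - max (G t) L) := by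
        rcases le_total (G t) L with hc | hc
        · rw [max_eq_right hc]
          have e1 : G (b - η) - G t ≤ max 0 (G (b - η) - G t) := le_max_right _ _
          have e3 : G b - L ≤ max 0 (G b - L) := le_max_right _ _
          linarith
        · rw [max_eq_left hc]
          have e1 : (0:ℝ) ≤ max 0 (G (b - η) - G t) := le_max_left _ _
          have e3 : G b - G t ≤ max 0 (G b - G t) := le_max_right _ _
          linarith
      linarith
    -- joint integrability and Fubini
    have hJoint : Integrable (uncurry fun t y => f y t)
        ((volume.restrict (Ioc a b)).prod (volume.restrict (Ioc (-1:ℝ) 1))) := by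
      apply (integrable_const (1:ℝ)).mono'
      · have : (uncurry fun t y => f y t) = fun p : ℝ × ℝ =>
            if r p.2 ≤ b ∧ p.1 < r p.2 then (1:ℝ) else 0 := by
          funext p; rfl
        rw [this]
        exact (Measurable.ite hSmeas measurable_const measurable_const).aestronglyMeasurable
      · refine Eventually.of_forall fun p => ?_
        have hup : uncurry (fun t y => f y t) p = f p.2 p.1 := rfl
        rw [hup, Real.norm_eq_abs, abs_of_nonneg (hf_nonneg p.2 p.1)]
        exact hf_le_one p.2 p.1
    have hD' : (∫ t in Ioc a b, ∫ y in Ioc (-1:ℝ) 1, f y t)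
        = ∫ y in Ioc (-1:ℝ) 1, ∫ t in Ioc a b, f y t :=
      integral_integral_swap hJoint
    -- step E : per-y bound
    have hE : ∀ y, (∫ t in Ioc a b, f y t) ≤ D y / 2 := by
      intro y
      by_cases hcond : r y ≤ b
      · by_cases hra : a < r y
        · have hfy : (fun t => f y t) = fun t => (Iio (r y)).indicator (fun _ => (1:ℝ)) t := by
            funext t
            simp only [hf, indicator_apply, mem_Iio]
            by_cases h : t < r y
            · rw [if_pos ⟨hcond, h⟩, if_pos h]
            · rw [if_neg (fun hc => h hc.2), if_neg h]
          rw [hfy, setIntegral_indicator measurableSet_Iio, setIntegral_const, smul_eq_mul,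
            mul_one]
          have hset : Ioc a b ∩ Iio (r y) = Ioo a (r y) := by
            ext t
            simp only [mem_inter_iff, mem_Ioc, mem_Iio, mem_Ioo]
            constructor
            · rintro ⟨⟨h1, _⟩, h3⟩; exact ⟨h1, h3⟩
            · rintro ⟨h1, h3⟩; exact ⟨⟨h1, le_trans h3.le hcond⟩, h3⟩
          rw [hset, Real.volume_real_Ioo_of_le (by linarith)]
          have hDval : D y = |a - r y| - (a - r y) := vbreg_eq_left hcond
          rw [hDval, abs_of_nonpos (by linarith : a - r y ≤ 0)]
          linarith
        · push_neg at hra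
          have hfy : ∀ t ∈ Ioc a b, f y t = 0 := by
            intro t ht
            simp only [hf]
            rw [if_neg]
            rintro ⟨_, h2⟩
            linarith [ht.1]
          rw [setIntegral_congr_fun measurableSet_Ioc hfy]
          simp only [integral_zero]
          linarith [hD_nonneg y]
      · have hfy : ∀ t ∈ Ioc a b, f y t = 0 := by
          intro t _
          simp only [hf]
          rw [if_neg]
          rintro ⟨h1, _⟩
          exact hcond h1
        rw [setIntegral_congr_fun measurableSet_Ioc hfy]
        simp only [integral_zero]
        linarith [hD_nonneg y]
    -- integrabilities
    have hInner1 : Integrable (fun t => ∫ y in Ioc (-1:ℝ) 1, f y t)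
        (volume.restrict (Ioc a b)) := hJoint.integral_prod_left
    have hInner2 : Integrable (fun y => ∫ t in Ioc a b, f y t)
        (volume.restrict (Ioc (-1:ℝ) 1)) := hJoint.integral_prod_right
    -- combine over Ioo / Ioc
    have hIoo1 : ∫ t in Ioc a b, (G b - G t) = ∫ t in Ioo a b, (G b - G t) :=
      integral_Ioc_eq_integral_Ioo
    have hIoo2 : (∫ t in Ioo a b, ∫ y in Ioc (-1:ℝ) 1, f y t)
        = ∫ t in Ioc a b, ∫ y in Ioc (-1:ℝ) 1, f y t :=
      integral_Ioc_eq_integral_Ioo.symm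
    have hIntLHS : IntegrableOn (fun t => G b - G t) (Ioo a b) volume := by
      have h9 : IntegrableOn (fun t => G b - G t) (Ioc a b) volume :=
        (integrable_const (G b)).sub hIntG
      exact h9.mono_set Ioo_subset_Ioc_self
    have hIntRHS : IntegrableOn (fun t => (∫ y in Ioc (-1:ℝ) 1, f y t) + (L - G (b - η)))
        (Ioo a b) volume :=
      ((show IntegrableOn (fun t => ∫ y in Ioc (-1:ℝ) 1, f y t) (Ioc a b) volume from
        hInner1).mono_set Ioo_subset_Ioc_self).add (integrable_const _)
    have hstep1 : (∫ t in Ioo a b, (G b - G t))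
        ≤ ∫ t in Ioo a b, ((∫ y in Ioc (-1:ℝ) 1, f y t) + (L - G (b - η))) :=
      setIntegral_mono_on hIntLHS hIntRHS measurableSet_Ioo hC
    have hsplitIoo : (∫ t in Ioo a b, ((∫ y in Ioc (-1:ℝ) 1, f y t) + (L - G (b - η))))
        = (∫ t in Ioo a b, ∫ y in Ioc (-1:ℝ) 1, f y t) + (b - a) * (L - G (b - η)) := by
      rw [integral_add ((show IntegrableOn (fun t => ∫ y in Ioc (-1:ℝ) 1, f y t)
          (Ioc a b) volume from hInner1).mono_set Ioo_subset_Ioc_self) (integrable_const _),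
        setIntegral_const, smul_eq_mul, Real.volume_real_Ioo_of_le (by linarith)]
    have hbae : (b - a) * (L - G (b - η)) ≤ L - G (b - η) :=
      mul_le_of_le_one_left he (by linarith [hb.2, ha.1])
    have hstep2 : (∫ y in Ioc (-1:ℝ) 1, ∫ t in Ioc a b, f y t)
        ≤ ∫ y in Ioc (-1:ℝ) 1, D y / 2 :=
      setIntegral_mono_on hInner2 (hD_int.div_const 2) measurableSet_Ioc fun y _ => hE y
    have hfinal : (∫ y in Ioc (-1:ℝ) 1, D y / 2) = (∫ y in Ioc (-1:ℝ) 1, D y) / 2 :=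
      integral_div 2 _
    linarith [hA, hIoo1, hstep1, hsplitIoo, hIoo2, hD', hstep2, hfinal, hbae, hη]
  · -- case a = b
    subst heq
    have h0 : breg φ g a a = 0 := by simp [breg]
    rw [h0]
    have hpos : 0 ≤ (∫ y in Ioc (-1:ℝ) 1, D y) / 2 := by
      apply div_nonneg _ (by norm_num)
      exact setIntegral_nonneg measurableSet_Ioc fun y _ => hD_nonneg y
    linarith
  · -- case b < a
    have hb1 : b < 1 := lt_of_lt_of_le hba ha.2
    set f : ℝ → ℝ → ℝ := fun y t => if b < r y ∧ r y < t then (1:ℝ) else 0 with hf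
    have hf_nonneg : ∀ y t, 0 ≤ f y t := by
      intro y t; simp only [hf]; split_ifs <;> norm_num
    have hf_le_one : ∀ y t, f y t ≤ 1 := by
      intro y t; simp only [hf]; split_ifs <;> norm_num
    -- measurability of f in y for fixed t, and jointly
    have hSmeas : MeasurableSet {p : ℝ × ℝ | b < r p.2 ∧ r p.2 < p.1} := by
      apply MeasurableSet.inter
      · exact measurableSet_lt measurable_const (hr_meas.comp measurable_snd)
      · exact measurableSet_lt (hr_meas.comp measurable_snd) measurable_fst
    have hIntG : IntegrableOn G (Ioc b a) volume :=
      (hG.intervalIntegrable (a := b) (b := a)).1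
    have hIntGs : IntegrableOn (fun t => G (t - 2*η)) (Ioc b a) volume := by
      have hm : Monotone fun t => G (t - 2*η) := fun s t hst => hG (by linarith)
      exact (hm.intervalIntegrable (a := b) (b := a)).1
    -- step A
    have hA : breg φ g a b = ∫ t in Ioc b a, (G t - G b) := by
      have h1 : φ a - φ b = ∫ t in Ioc b a, G t := by
        rw [hφ b a hb.1 hba.le ha.2, intervalIntegral.integral_of_le hba.le]
      have h2 : ∫ t in Ioc b a, (G t - G b) = (∫ t in Ioc b a, G t) - (a - b) * G b := by
        rw [integral_sub hIntG (integrable_const _), setIntegral_const, smul_eq_mul,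
          Real.volume_real_Ioc_of_le (by linarith)]
      simp only [breg]
      rw [hgb, h2, ← h1]
      ring
    -- step B : shift
    have hB : (∫ t in Ioc b a, (G t - G b)) ≤ (∫ t in Ioc b a, (G (t - 2*η) - G b)) + 4*η := by
      have hsplit1 : ∫ t in Ioc b a, (G t - G b) =
          (∫ t in Ioc b a, G t) - (a - b) * G b := by
        rw [integral_sub hIntG (integrable_const _), setIntegral_const, smul_eq_mul,
          Real.volume_real_Ioc_of_le (by linarith)]
      have hsplit2 : ∫ t in Ioc b a, (G (t - 2*η) - G b) =
          (∫ t in Ioc b a, G (t - 2*η)) - (a - b) * G b := by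
        rw [integral_sub hIntGs (integrable_const _), setIntegral_const, smul_eq_mul,
          Real.volume_real_Ioc_of_le (by linarith)]
      rw [hsplit1, hsplit2]
      have hshift : ∫ t in Ioc b a, G (t - 2*η) = ∫ t in (b - 2*η)..(a - 2*η), G t := by
        rw [← intervalIntegral.integral_of_le hba.le,
          intervalIntegral.integral_comp_sub_right G (2*η)]
      have hii : ∀ u v : ℝ, IntervalIntegrable G volume u v := fun u v =>
        hG.intervalIntegrable
      have hadd1 : (∫ t in (b - 2*η)..(a - 2*η), G t) + ∫ t in (a - 2*η)..a, G t
          = ∫ t in (b - 2*η)..a, G t :=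
        intervalIntegral.integral_add_adjacent_intervals (hii _ _) (hii _ _)
      have hadd2 : (∫ t in (b - 2*η)..b, G t) + ∫ t in b..a, G t
          = ∫ t in (b - 2*η)..a, G t :=
        intervalIntegral.integral_add_adjacent_intervals (hii _ _) (hii _ _)
      have hbnd1 : (∫ t in (a - 2*η)..a, G t) ≤ 2*η := by
        have h1 : (∫ t in (a - 2*η)..a, G t) ≤ ∫ _t in (a - 2*η)..a, (1:ℝ) :=
          intervalIntegral.integral_mono_on (by linarith) (hii _ _) intervalIntegrable_const
            (fun t _ => (hGb t).2)
        rw [intervalIntegral.integral_const, smul_eq_mul] at h1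
        linarith
      have hbnd2 : (∫ t in (b - 2*η)..b, G t) ≥ -(2*η) := by
        have h1 : (∫ _t in (b - 2*η)..b, (-1:ℝ)) ≤ ∫ t in (b - 2*η)..b, G t :=
          intervalIntegral.integral_mono_on (by linarith) intervalIntegrable_const (hii _ _)
            (fun t _ => (hGb t).1)
        rw [intervalIntegral.integral_const, smul_eq_mul] at h1
        linarith
      have hIoc : ∫ t in Ioc b a, G t = ∫ t in b..a, G t :=
        (intervalIntegral.integral_of_le hba.le).symm
      rw [hshift, hIoc]
      linarith
    -- step C : pointwise lower bound on the y-measure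
    have hC : ∀ t ∈ Ioc b a, G (t - 2*η) - G b ≤ ∫ y in Ioc (-1:ℝ) 1, f y t := by
      intro t ht
      have hnn : 0 ≤ ∫ y in Ioc (-1:ℝ) 1, f y t :=
        setIntegral_nonneg measurableSet_Ioc fun y _ => hf_nonneg y t
      rcases le_or_gt (G (t - 2*η)) (G b) with hcase | hcase
      · linarith
      · have ht2 : 0 ≤ t - 2*η := by
          by_contra hcc
          push_neg at hcc
          exact absurd (hG (by linarith [hb.1] : t - 2*η ≤ b)) (not_le.mpr hcase)
        have hind : ∀ y, (Ico (G b) (G (t - 2*η))).indicator (fun _ => (1:ℝ)) y ≤ f y t := by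
          intro y
          by_cases hy : y ∈ Ico (G b) (G (t - 2*η))
          · rw [indicator_of_mem hy]
            have hr1 : b < r y := lt_rsel hη hb.1 hb1 hy.1
            have hr2 : r y < t := by
              have h9 : y < G (t - η - η) := by
                have : t - η - η = t - 2*η := by ring
                rw [this]; exact hy.2
              have := rsel_le hG hη (t := t - η) (by linarith) h9
              rw [← hr] at this
              linarith
            have hcc : b < r y ∧ r y < t := ⟨hr1, hr2⟩
            simp only [hf]
            rw [if_pos hcc]
          · rw [indicator_of_notMem hy]
            exact hf_nonneg y t
        have hint1 : IntegrableOn (fun y => (Ico (G b) (G (t - 2*η))).indicator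
            (fun _ => (1:ℝ)) y) (Ioc (-1:ℝ) 1) volume :=
          (integrable_const (1:ℝ)).indicator measurableSet_Ico
        have hint2 : IntegrableOn (fun y => f y t) (Ioc (-1:ℝ) 1) volume := by
          apply (integrable_const (1:ℝ)).mono'
          · have hset : MeasurableSet {y : ℝ | b < r y ∧ r y < t} :=
              (measurableSet_lt measurable_const hr_meas).inter
                (measurableSet_lt hr_meas measurable_const)
            exact (Measurable.ite hset measurable_const measurable_const).aestronglyMeasurable
          · exact Eventually.of_forall fun y => by
              rw [Real.norm_eq_abs, abs_of_nonneg (hf_nonneg y t)]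
              exact hf_le_one y t
        calc G (t - 2*η) - G b
            = max 0 (G (t - 2*η) - G b) := (max_eq_right (by linarith)).symm
          _ = ∫ y in Ioc (-1:ℝ) 1, (Ico (G b) (G (t - 2*η))).indicator (fun _ => (1:ℝ)) y :=
              (ico_len (hGb b).1 (hGb (t - 2*η)).2).symm
          _ ≤ ∫ y in Ioc (-1:ℝ) 1, f y t :=
              setIntegral_mono_on hint1 hint2 measurableSet_Ioc fun y _ => hind y
    -- joint integrability for Fubini
    have hJoint : Integrable (uncurry fun t y => f y t)
        ((volume.restrict (Ioc b a)).prod (volume.restrict (Ioc (-1:ℝ) 1))) := by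
      apply (integrable_const (1:ℝ)).mono'
      · have : (uncurry fun t y => f y t) = fun p : ℝ × ℝ =>
            if b < r p.2 ∧ r p.2 < p.1 then (1:ℝ) else 0 := by
          funext p; rfl
        rw [this]
        exact (Measurable.ite hSmeas measurable_const measurable_const).aestronglyMeasurable
      · refine Eventually.of_forall fun p => ?_
        have hup : uncurry (fun t y => f y t) p = f p.2 p.1 := rfl
        rw [hup, Real.norm_eq_abs, abs_of_nonneg (hf_nonneg p.2 p.1)]
        exact hf_le_one p.2 p.1
    -- Fubini
    have hD' : (∫ t in Ioc b a, ∫ y in Ioc (-1:ℝ) 1, f y t)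
        = ∫ y in Ioc (-1:ℝ) 1, ∫ t in Ioc b a, f y t :=
      integral_integral_swap hJoint
    -- step E : per-y bound
    have hE : ∀ y, (∫ t in Ioc b a, f y t) ≤ D y / 2 := by
      intro y
      by_cases hcond : b < r y
      · have hfy : (fun t => f y t) = fun t => (Ioi (r y)).indicator (fun _ => (1:ℝ)) t := by
          funext t
          simp only [hf, indicator_apply, mem_Ioi]
          by_cases h : r y < t
          · rw [if_pos ⟨hcond, h⟩, if_pos h]
          · rw [if_neg (fun hc => h hc.2), if_neg h]
        rw [hfy, setIntegral_indicator measurableSet_Ioi, setIntegral_const, smul_eq_mul,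
          mul_one, Ioc_inter_Ioi, sup_eq_right.mpr hcond.le]
        have hDval : D y = |a - r y| + (a - r y) := vbreg_eq_right hcond
        rcases le_or_gt (r y) a with hra | hra
        · rw [Real.volume_real_Ioc_of_le (by linarith)]
          rw [hDval, abs_of_nonneg (by linarith : (0:ℝ) ≤ a - r y)]
          linarith
        · rw [Ioc_eq_empty (not_lt.mpr hra.le)]
          simp only [measureReal_empty]
          linarith [hD_nonneg y]
      · have hfy : ∀ t, f y t = 0 := by
          intro t
          simp only [hf, if_neg (fun hc : b < r y ∧ r y < t => hcond hc.1)]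
        simp only [hfy, integral_zero]
        linarith [hD_nonneg y]
    -- integrabilities for combining
    have hInner1 : Integrable (fun t => ∫ y in Ioc (-1:ℝ) 1, f y t)
        (volume.restrict (Ioc b a)) := hJoint.integral_prod_left
    have hInner2 : Integrable (fun y => ∫ t in Ioc b a, f y t)
        (volume.restrict (Ioc (-1:ℝ) 1)) := hJoint.integral_prod_right
    have hIntGs' : IntegrableOn (fun t => G (t - 2*η) - G b) (Ioc b a) volume :=
      hIntGs.sub (integrable_const _)
    have hstep1 : (∫ t in Ioc b a, (G (t - 2*η) - G b))
        ≤ ∫ t in Ioc b a, ∫ y in Ioc (-1:ℝ) 1, f y t :=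
      setIntegral_mono_on hIntGs' hInner1 measurableSet_Ioc hC
    have hstep2 : (∫ y in Ioc (-1:ℝ) 1, ∫ t in Ioc b a, f y t)
        ≤ ∫ y in Ioc (-1:ℝ) 1, D y / 2 :=
      setIntegral_mono_on hInner2 (hD_int.div_const 2) measurableSet_Ioc fun y _ => hE y
    have hfinal : (∫ y in Ioc (-1:ℝ) 1, D y / 2) = (∫ y in Ioc (-1:ℝ) 1, D y) / 2 :=
      integral_div 2 _
    linarith [hA, hB, hstep1, hstep2, hD', hfinal, he]
end Master
/-- Lipschitz bound for `φ` on `[0,1]`. -/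
lemma phi_lip {φ : ℝ → ℝ} {G : ℝ → ℝ}
    (hGb : ∀ t, G t ∈ Icc (-1:ℝ) 1)
    (hG : Monotone G)
    (hφ : ∀ x y : ℝ, 0 ≤ x → x ≤ y → y ≤ 1 → φ y - φ x = ∫ t in x..y, G t)
    {a b : ℝ} (ha : a ∈ Icc (0:ℝ) 1) (hb : b ∈ Icc (0:ℝ) 1) :
    |φ a - φ b| ≤ |a - b| := by
  have key : ∀ x y : ℝ, 0 ≤ x → x ≤ y → y ≤ 1 → |φ y - φ x| ≤ y - x := by
    intro x y hx hxy hy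
    rw [hφ x y hx hxy hy]
    have hup : (∫ t in x..y, G t) ≤ ∫ _t in x..y, (1:ℝ) :=
      intervalIntegral.integral_mono_on hxy hG.intervalIntegrable
        intervalIntegrable_const (fun t _ => (hGb t).2)
    have hlo : (∫ _t in x..y, (-1:ℝ)) ≤ ∫ t in x..y, G t :=
      intervalIntegral.integral_mono_on hxy intervalIntegrable_const
        hG.intervalIntegrable (fun t _ => (hGb t).1)
    rw [intervalIntegral.integral_const, smul_eq_mul] at hup hlo
    rw [abs_le]
    constructor <;> linarith
  rcases le_total a b with h | h
  · rw [abs_sub_comm (φ a) (φ b), abs_sub_comm a b,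
      abs_of_nonneg (by linarith : (0:ℝ) ≤ b - a)]
    exact key a b ha.1 h hb.2
  · rw [abs_of_nonneg (by linarith : (0:ℝ) ≤ a - b)]
    exact key b a hb.1 h ha.2
end BregmanAux

end

noncomputable section
open BregmanAux MeasureTheory Set Function Filter Topology

theorem bregman_le_sup_vshaped
    (φ g : ℝ → ℝ) (hconv : ConvexOn ℝ (Set.Icc (0 : ℝ) 1) φ)
    (hsub : IsSubgradientOn φ g)
    (hbdd : ∀ v ∈ Set.Icc (0 : ℝ) 1, g v ∈ Set.Icc (-1 : ℝ) 1)
    (μ : Measure (ℝ × ℝ)) [IsProbabilityMeasure μ]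
    (hsupp : μ ((Set.Icc (0 : ℝ) 1 ×ˢ Set.Icc (0 : ℝ) 1)ᶜ) = 0) :
    (∫ z, breg φ g z.1 z.2 ∂μ) ≤
      sSup {e : ℝ | ∃ vs ∈ Set.Icc (0 : ℝ) 1,
        e = ∫ z, breg (vshape vs) (vshapeGrad vs) z.1 z.2 ∂μ} := by
  set G := gbar g with hGdef
  have hG : Monotone G := gbar_mono hsub
  have hGb : ∀ t, G t ∈ Icc (-1:ℝ) 1 := gbar_mem hbdd
  have hφeq : ∀ x y : ℝ, 0 ≤ x → x ≤ y → y ≤ 1 → φ y - φ x = ∫ t in x..y, G t :=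
    fun x y hx hxy hy => phi_eq hsub hbdd hx hxy hy
  set F : ℝ → ℝ := fun vs => ∫ z, breg (vshape vs) (vshapeGrad vs) z.1 z.2 ∂μ with hF
  set S := sSup {e : ℝ | ∃ vs ∈ Set.Icc (0 : ℝ) 1, e = F vs} with hS
  -- a.e. support
  have hae : ∀ᵐ z ∂μ, z ∈ Icc (0:ℝ) 1 ×ˢ Icc (0:ℝ) 1 := by
    rw [ae_iff]
    exact hsupp
  -- measurability of the V-shaped integrand
  have hVmeas : ∀ vs : ℝ, Measurable (fun z : ℝ × ℝ =>
      breg (vshape vs) (vshapeGrad vs) z.1 z.2) := by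
    intro vs
    have h1 : Measurable fun z : ℝ × ℝ => |z.1 - vs| := (measurable_fst.sub measurable_const).abs
    have h2 : Measurable fun z : ℝ × ℝ => |z.2 - vs| := (measurable_snd.sub measurable_const).abs
    have hset : MeasurableSet {z : ℝ × ℝ | z.2 < vs} :=
      measurableSet_lt measurable_snd measurable_const
    have h3 : Measurable fun z : ℝ × ℝ =>
        (if z.2 < vs then (-1:ℝ) else 1) * (z.1 - z.2) :=
      (Measurable.ite hset measurable_const measurable_const).mul
        (measurable_fst.sub measurable_snd)
    have : (fun z : ℝ × ℝ => breg (vshape vs) (vshapeGrad vs) z.1 z.2)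
        = fun z => |z.1 - vs| - |z.2 - vs| - (if z.2 < vs then (-1:ℝ) else 1) * (z.1 - z.2) := by
      funext z
      simp only [breg, vshape, vshapeGrad]
    rw [this]
    exact (h1.sub h2).sub h3
  have hVint : ∀ vs ∈ Icc (0:ℝ) 1, Integrable (fun z : ℝ × ℝ =>
      breg (vshape vs) (vshapeGrad vs) z.1 z.2) μ := by
    intro vs hvs
    apply (integrable_const (3:ℝ)).mono' (hVmeas vs).aestronglyMeasurable
    exact hae.mono fun z hz => by
      rw [Real.norm_eq_abs]
      exact vbreg_bound hvs hz.1 hz.2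
  have hFle3 : ∀ vs ∈ Icc (0:ℝ) 1, F vs ≤ 3 := by
    intro vs hvs
    have h1 : F vs ≤ ∫ _z, (3:ℝ) ∂μ := by
      apply integral_mono_ae (hVint vs hvs) (integrable_const _)
      exact hae.mono fun z hz => (abs_le.mp (vbreg_bound hvs hz.1 hz.2)).2
    rw [integral_const, probReal_univ, one_smul] at h1
    exact h1
  have hSet_ne : {e : ℝ | ∃ vs ∈ Set.Icc (0 : ℝ) 1, e = F vs}.Nonempty :=
    ⟨F 0, 0, ⟨le_rfl, zero_le_one⟩, rfl⟩
  have hbddA : BddAbove {e : ℝ | ∃ vs ∈ Set.Icc (0 : ℝ) 1, e = F vs} := by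
    refine ⟨3, ?_⟩
    rintro e ⟨vs, hvs, rfl⟩
    exact hFle3 vs hvs
  have hFleS : ∀ vs ∈ Icc (0:ℝ) 1, F vs ≤ S := fun vs hvs =>
    le_csSup hbddA ⟨vs, hvs, rfl⟩
  have hF0 : 0 ≤ F 0 := integral_nonneg fun z => vbreg_nonneg _ _ _
  have hS0 : 0 ≤ S := le_trans hF0 (hFleS 0 ⟨le_rfl, zero_le_one⟩)
  -- integrability of the LHS integrand
  have hLHSmeas : AEStronglyMeasurable (fun z : ℝ × ℝ => breg φ g z.1 z.2) μ := by
    set ψ : ℝ → ℝ := fun x => φ 0 + ∫ t in (0:ℝ)..clamp x, G t with hψ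
    have hψcont : Continuous ψ := by
      apply continuous_const.add
      have hprim : Continuous fun u : ℝ => ∫ t in (0:ℝ)..u, G t :=
        intervalIntegral.continuous_primitive (fun a b => hG.intervalIntegrable) 0
      have hclamp : Continuous clamp :=
        continuous_const.max (continuous_const.min continuous_id)
      exact hprim.comp hclamp
    have hψeq : ∀ x ∈ Icc (0:ℝ) 1, φ x = ψ x := by
      intro x hx
      have h1 := hφeq 0 x le_rfl hx.1 hx.2
      simp only [hψ]
      rw [clamp_eq hx]
      linarith
    have hmg : Measurable (fun z : ℝ × ℝ => ψ z.1 - ψ z.2 - G z.2 * (z.1 - z.2)) := by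
      have h1 : Measurable fun z : ℝ × ℝ => ψ z.1 := hψcont.measurable.comp measurable_fst
      have h2 : Measurable fun z : ℝ × ℝ => ψ z.2 := hψcont.measurable.comp measurable_snd
      have h3 : Measurable fun z : ℝ × ℝ => G z.2 * (z.1 - z.2) :=
        (hG.measurable.comp measurable_snd).mul (measurable_fst.sub measurable_snd)
      exact (h1.sub h2).sub h3
    apply hmg.aestronglyMeasurable.congr
    apply (hae.mono fun z hz => ?_)
    simp only [breg]
    rw [hψeq z.1 hz.1, hψeq z.2 hz.2, hGdef, gbar_eq hz.2]
  have hLHSbdd : ∀ᵐ z ∂μ, |breg φ g z.1 z.2| ≤ 2 := by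
    apply hae.mono fun z hz => ?_
    have h1 : |φ z.1 - φ z.2| ≤ |z.1 - z.2| := phi_lip hGb hG hφeq hz.1 hz.2
    have h2 : |z.1 - z.2| ≤ 1 := by
      rw [abs_le]
      exact ⟨by linarith [hz.1.1, hz.2.2], by linarith [hz.1.2, hz.2.1]⟩
    have h3 : |g z.2| ≤ 1 := by
      rcases hbdd z.2 hz.2 with ⟨hl, hr⟩
      rw [abs_le]; exact ⟨hl, hr⟩
    have h4 : |g z.2 * (z.1 - z.2)| ≤ 1 := by
      rw [abs_mul]
      calc |g z.2| * |z.1 - z.2| ≤ 1 * 1 :=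
            mul_le_mul h3 h2 (abs_nonneg _) zero_le_one
        _ = 1 := by norm_num
    calc |breg φ g z.1 z.2| = |(φ z.1 - φ z.2) - g z.2 * (z.1 - z.2)| := rfl
      _ ≤ |φ z.1 - φ z.2| + |g z.2 * (z.1 - z.2)| := abs_sub _ _
      _ ≤ 2 := by linarith
  have hLHSint : Integrable (fun z : ℝ × ℝ => breg φ g z.1 z.2) μ :=
    (integrable_const (2:ℝ)).mono' hLHSmeas
      (hLHSbdd.mono fun z hz => by rwa [Real.norm_eq_abs])
  -- the key per-n bound
  have key : ∀ n : ℕ, (∫ z, breg φ g z.1 z.2 ∂μ) ≤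
      S + 4 * (1/((n:ℝ)+1)) + ∫ z, (leftLim G z.2 - G (z.2 - 1/((n:ℝ)+1))) ∂μ := by
    intro n
    set η := 1/((n:ℝ)+1) with hη'
    have hηpos : 0 < η := by positivity
    have herr_meas : Measurable (fun z : ℝ × ℝ => leftLim G z.2 - G (z.2 - η)) := by
      have h1 : Measurable fun z : ℝ × ℝ => leftLim G z.2 :=
        (hG.leftLim.measurable).comp measurable_snd
      have h2 : Measurable fun z : ℝ × ℝ => G (z.2 - η) :=
        hG.measurable.comp (measurable_snd.sub measurable_const)
      exact h1.sub h2
    have herr_bdd : ∀ z : ℝ × ℝ, |leftLim G z.2 - G (z.2 - η)| ≤ 2 := by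
      intro z
      have h1 : G (z.2 - 1) ≤ leftLim G z.2 := hG.le_leftLim (by linarith)
      have h2 : leftLim G z.2 ≤ G z.2 := hG.leftLim_le le_rfl
      have h3 := hGb (z.2 - 1)
      have h4 := hGb z.2
      have h5 := hGb (z.2 - η)
      rw [abs_le]
      constructor <;> [linarith [h3.1, h5.2]; linarith [h4.2, h5.1]]
    have herr_int : Integrable (fun z : ℝ × ℝ => leftLim G z.2 - G (z.2 - η)) μ :=
      (integrable_const (2:ℝ)).mono' herr_meas.aestronglyMeasurable
        (Eventually.of_forall fun z => by rw [Real.norm_eq_abs]; exact herr_bdd z)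
    have hrmeas := rsel_measurable hG η
    -- joint integrand
    set H : (ℝ × ℝ) → ℝ → ℝ := fun z y =>
      breg (vshape (rsel G η y)) (vshapeGrad (rsel G η y)) z.1 z.2 with hH
    have hHmeas : Measurable (uncurry H) := by
      have h1 : Measurable fun p : (ℝ × ℝ) × ℝ => |p.1.1 - rsel G η p.2| :=
        ((measurable_fst.fst).sub (hrmeas.comp measurable_snd)).abs
      have h2 : Measurable fun p : (ℝ × ℝ) × ℝ => |p.1.2 - rsel G η p.2| :=
        ((measurable_fst.snd).sub (hrmeas.comp measurable_snd)).abs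
      have hset : MeasurableSet {p : (ℝ × ℝ) × ℝ | p.1.2 < rsel G η p.2} :=
        measurableSet_lt (measurable_fst.snd) (hrmeas.comp measurable_snd)
      have h3 : Measurable fun p : (ℝ × ℝ) × ℝ =>
          (if p.1.2 < rsel G η p.2 then (-1:ℝ) else 1) * (p.1.1 - p.1.2) :=
        (Measurable.ite hset measurable_const measurable_const).mul
          ((measurable_fst.fst).sub (measurable_fst.snd))
      have heq : uncurry H = fun p : (ℝ × ℝ) × ℝ =>
          |p.1.1 - rsel G η p.2| - |p.1.2 - rsel G η p.2|
            - (if p.1.2 < rsel G η p.2 then (-1:ℝ) else 1) * (p.1.1 - p.1.2) := by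
        funext p
        simp only [hH, uncurry, breg, vshape, vshapeGrad]
      rw [heq]
      exact (h1.sub h2).sub h3
    set ν := volume.restrict (Ioc (-1:ℝ) 1) with hν
    have haeP : ∀ᵐ p ∂(μ.prod ν), p.1 ∈ Icc (0:ℝ) 1 ×ˢ Icc (0:ℝ) 1 := by
      rw [ae_iff]
      have hseteq : {p : (ℝ × ℝ) × ℝ | ¬ p.1 ∈ Icc (0:ℝ) 1 ×ˢ Icc (0:ℝ) 1}
          = ((Icc (0:ℝ) 1 ×ˢ Icc (0:ℝ) 1)ᶜ) ×ˢ (univ : Set ℝ) := by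
        ext p
        simp [Set.mem_prod]
      rw [hseteq, Measure.prod_prod, hsupp, zero_mul]
    have hHint : Integrable (uncurry H) (μ.prod ν) := by
      apply (integrable_const (3:ℝ)).mono' hHmeas.aestronglyMeasurable
      apply haeP.mono fun p hp => ?_
      rw [Real.norm_eq_abs]
      exact vbreg_bound (rsel_mem hηpos.le p.2) hp.1 hp.2
    -- the master inequality, a.e.
    have hmaster : ∀ᵐ z ∂μ, breg φ g z.1 z.2 ≤
        (∫ y in Ioc (-1:ℝ) 1, H z y) / 2 + 4 * η + (leftLim G z.2 - G (z.2 - η)) :=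
      hae.mono fun z hz =>
        master φ g hG hGb hφeq hηpos hz.1 hz.2 (by rw [hGdef]; exact (gbar_eq hz.2).symm)
    have hJint : Integrable (fun z => ∫ y in Ioc (-1:ℝ) 1, H z y) μ := by
      have := hHint.integral_prod_left
      simpa using this
    have hI1 : Integrable (fun z : ℝ × ℝ => (∫ y in Ioc (-1:ℝ) 1, H z y) / 2) μ :=
      hJint.div_const 2
    have hI2 : Integrable (fun z : ℝ × ℝ => (∫ y in Ioc (-1:ℝ) 1, H z y) / 2 + 4 * η) μ :=
      hI1.add (integrable_const _)
    have hRHSint : Integrable (fun z : ℝ × ℝ =>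
        (∫ y in Ioc (-1:ℝ) 1, H z y) / 2 + 4 * η + (leftLim G z.2 - G (z.2 - η))) μ :=
      hI2.add herr_int
    have hmono := integral_mono_ae hLHSint hRHSint hmaster
    -- compute the RHS integral
    have hsplit : (∫ z, ((∫ y in Ioc (-1:ℝ) 1, H z y) / 2 + 4 * η
        + (leftLim G z.2 - G (z.2 - η))) ∂μ)
        = (∫ z, (∫ y in Ioc (-1:ℝ) 1, H z y) ∂μ) / 2 + 4 * η
          + ∫ z, (leftLim G z.2 - G (z.2 - η)) ∂μ := by
      rw [integral_add hI2 herr_int, integral_add hI1 (integrable_const _),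
        integral_div, integral_const, probReal_univ, one_smul]
    -- Fubini and the sup bound
    have hswap : (∫ z, (∫ y in Ioc (-1:ℝ) 1, H z y) ∂μ)
        = ∫ y in Ioc (-1:ℝ) 1, (∫ z, H z y ∂μ) := integral_integral_swap hHint
    have hinty : Integrable (fun y => ∫ z, H z y ∂μ) ν := hHint.integral_prod_right
    have hFr : ∀ y : ℝ, (∫ z, H z y ∂μ) = F (rsel G η y) := fun y => rfl
    have hyle : (∫ y in Ioc (-1:ℝ) 1, (∫ z, H z y ∂μ))
        ≤ ∫ _y in Ioc (-1:ℝ) 1, S := by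
      apply setIntegral_mono_on hinty (integrable_const _) measurableSet_Ioc
      intro y _
      rw [hFr y]
      exact hFleS _ (rsel_mem hηpos.le y)
    have hSconst : (∫ _y in Ioc (-1:ℝ) 1, S) = 2 * S := by
      rw [setIntegral_const, smul_eq_mul, Real.volume_real_Ioc]
      norm_num
    have hJle : (∫ z, (∫ y in Ioc (-1:ℝ) 1, H z y) ∂μ) ≤ 2 * S := by
      rw [hswap]
      linarith [hyle, hSconst]
    linarith [hmono, hsplit, hJle]
  -- take the limit n → ∞
  have herrlim : Tendsto (fun n : ℕ =>
      ∫ z, (leftLim G z.2 - G (z.2 - 1/((n:ℝ)+1))) ∂μ) atTop (𝓝 0) := by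
    have h0 : Tendsto (fun n : ℕ => (1:ℝ)/((n:ℝ)+1)) atTop (𝓝 0) :=
      tendsto_one_div_add_atTop_nhds_zero_nat
    have hdct : Tendsto (fun n : ℕ =>
        ∫ z, (leftLim G z.2 - G (z.2 - 1/((n:ℝ)+1))) ∂μ) atTop (𝓝 (∫ _z, (0:ℝ) ∂μ)) := by
      apply tendsto_integral_of_dominated_convergence (fun _ => (2:ℝ))
      · intro n
        have h1 : Measurable fun z : ℝ × ℝ => leftLim G z.2 - G (z.2 - 1/((n:ℝ)+1)) := by
          have ha1 : Measurable fun z : ℝ × ℝ => leftLim G z.2 :=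
            (hG.leftLim.measurable).comp measurable_snd
          have ha2 : Measurable fun z : ℝ × ℝ => G (z.2 - 1/((n:ℝ)+1)) :=
            hG.measurable.comp (measurable_snd.sub measurable_const)
          exact ha1.sub ha2
        exact h1.aestronglyMeasurable
      · exact integrable_const _
      · intro n
        apply Eventually.of_forall fun z => ?_
        rw [Real.norm_eq_abs]
        have h1 : G (z.2 - 1) ≤ leftLim G z.2 := hG.le_leftLim (by linarith)
        have h2 : leftLim G z.2 ≤ G z.2 := hG.leftLim_le le_rfl
        have h3 := hGb (z.2 - 1)
        have h4 := hGb z.2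
        have h5 := hGb (z.2 - 1/((n:ℝ)+1))
        rw [abs_le]
        constructor <;> [linarith [h3.1, h5.2]; linarith [h4.2, h5.1]]
      · apply Eventually.of_forall fun z => ?_
        have h1 : Tendsto (fun n : ℕ => z.2 - 1/((n:ℝ)+1)) atTop (𝓝[<] z.2) := by
          rw [tendsto_nhdsWithin_iff]
          constructor
          · have := h0.const_sub z.2
            simpa using this
          · apply Eventually.of_forall fun n => ?_
            have : (0:ℝ) < 1/((n:ℝ)+1) := by positivity
            simp only [mem_Iio]
            linarith
        have h2 : Tendsto (fun n : ℕ => G (z.2 - 1/((n:ℝ)+1))) atTop (𝓝 (leftLim G z.2)) :=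
          (hG.tendsto_leftLim z.2).comp h1
        have h3 := Tendsto.const_sub (leftLim G z.2) h2
        simpa using h3
    simpa using hdct
  have hlim2 : Tendsto (fun n : ℕ => S + 4 * (1/((n:ℝ)+1))
      + ∫ z, (leftLim G z.2 - G (z.2 - 1/((n:ℝ)+1))) ∂μ) atTop (𝓝 S) := by
    have h0 : Tendsto (fun n : ℕ => (1:ℝ)/((n:ℝ)+1)) atTop (𝓝 0) :=
      tendsto_one_div_add_atTop_nhds_zero_nat
    have hc : Tendsto (fun _ : ℕ => S) atTop (𝓝 S) := tendsto_const_nhds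
    have h1 := hc.add (h0.const_mul 4)
    have h2 := h1.add herrlim
    simpa using h2
  exact ge_of_tendsto hlim2 (Eventually.of_forall key)
end
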